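/- Let Y = {0,1}^ℕ with the ultrametric d(x,y) = e^{-k} for x ≠ y, where k = min{i : x_i ≠ y_i}, and d(x,x) = 0. For x ∈ Y let x̄ denote the coordinatewise complement, and define α_x : Y → Y by α_x(x) = x̄ and, for y ≠ x with n = min{i : x_i ≠ y_i}, (α_x(y))_i = 1 − y_i for i ≤ n and (α_x(y))_i = y_i for i > n. Let Γ be the subgroup of the group of bijections of Y generated by {α_x : x ∈ Y}. Then Γ acts locally rigidly on Y: for every x ∈ Y and every γ ∈ Γ with γ(x) = x, there exists ε > 0 such that γ(y) = y for all y ∈ B(x,ε). -/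

import Mathlib

open Classical in
/-- The standard ultrametric on spaces of sequences: `d(x,y) = e^{-k}` where `k` is the
first coordinate at which `x` and `y` differ, and `d(x,x) = 0`. -/
noncomputable def seqDist {α : Type*} (x y : ℕ → α) : ℝ :=
  if h : x = y then 0 else Real.exp (-(Nat.find (Function.ne_iff.mp h) : ℝ))

/-- The coordinatewise complement of a sequence of `0`s and `1`s. -/
def compSeq (x : ℕ → Fin 2) : ℕ → Fin 2 := fun i => 1 - x i

open Classical in
/-- The map `α_x : Y → Y` on `Y = {0,1}^ℕ`: it sends `x` to its complement `x̄`, and for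
`y ≠ x`, letting `n` be the first coordinate at which `x` and `y` differ, it complements
the coordinates `y_i` for `i ≤ n` and leaves the coordinates `y_i` for `i > n` unchanged. -/
noncomputable def alphaMap (x : ℕ → Fin 2) : (ℕ → Fin 2) → (ℕ → Fin 2) := fun y =>
  if h : y = x then compSeq x
  else fun i =>
    if i ≤ Nat.find (Function.ne_iff.mp (show x ≠ y from fun e => h e.symm)) then
      1 - y i
    else y i

section aux

-- Fin 2 arithmetic facts
private lemma f1 : ∀ a b : Fin 2, 1 - (a + b) = (1 - a) + b := by decide
private lemma f2 : ∀ a : Fin 2, 1 - a = a + 1 := by decide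
private lemma f3 : ∀ a : Fin 2, a + a = 0 := by decide
private lemma f4 : ∀ a b : Fin 2, 1 - ((1 - a) + b) = a + b := by decide
private lemma f6 : ∀ a : Fin 2, 1 - (1 - a) = a := by decide
private lemma f7 : ∀ a : Fin 2, a ≠ 1 - a := by decide

private lemma find_irrel {p : ℕ → Prop} (i1 i2 : DecidablePred p) (h : ∃ n, p n) :
    @Nat.find p i1 h = @Nat.find p i2 h := by
  have e : i1 = i2 := by
    funext a
    exact Subsingleton.elim _ _
  subst e
  rfl

private lemma exists_fd {x y : ℕ → Fin 2} (h : x ≠ y) :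
    ∃ n, x n ≠ y n ∧ ∀ i < n, x i = y i := by
  classical
  obtain ⟨hs⟩ : Nonempty (∃ a, x a ≠ y a) := ⟨Function.ne_iff.mp h⟩
  exact ⟨Nat.find hs, Nat.find_spec hs, fun i hi => not_not.mp (Nat.find_min hs hi)⟩

private lemma alpha_eq (x y : ℕ → Fin 2) (n : ℕ) (hn : x n ≠ y n)
    (hlt : ∀ i < n, x i = y i) :
    alphaMap x y = fun i => if i ≤ n then 1 - y i else y i := by
  have hxy : x ≠ y := fun e => hn (congrFun e n)
  have hyx : y ≠ x := fun e => hxy e.symm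
  rw [alphaMap, dif_neg hyx]
  have hfind : Nat.find (Function.ne_iff.mp (show x ≠ y from fun e => hyx e.symm)) = n := by
    rw [Nat.find_eq_iff]
    exact ⟨hn, fun m hm => not_not_intro (hlt m hm)⟩
  rw [hfind]

private lemma alpha_self (x : ℕ → Fin 2) : alphaMap x x = compSeq x := by
  rw [alphaMap, dif_pos rfl]

private lemma compSeq_add (x c : ℕ → Fin 2) : compSeq (x + c) = compSeq x + c := by
  funext i
  simp only [compSeq, Pi.add_apply]
  exact f1 _ _

private lemma compSeq_comp (x : ℕ → Fin 2) : compSeq (compSeq x) = x := by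
  funext i
  exact f6 _

-- A3 : translation equivariance
private lemma alpha_add (x y c : ℕ → Fin 2) :
    alphaMap (x + c) (y + c) = alphaMap x y + c := by
  by_cases h : y = x
  · subst h
    rw [alpha_self, alpha_self, compSeq_add]
  · have hxy : x ≠ y := fun e => h e.symm
    obtain ⟨n, hn, hlt⟩ := exists_fd hxy
    have hn' : (x + c) n ≠ (y + c) n := by
      simp only [Pi.add_apply]
      intro e
      exact hn (by have := add_right_cancel e; exact this)
    have hlt' : ∀ i < n, (x + c) i = (y + c) i := fun i hi => by
      simp only [Pi.add_apply, hlt i hi]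
    rw [alpha_eq x y n hn hlt, alpha_eq (x + c) (y + c) n hn' hlt']
    funext i
    simp only [Pi.add_apply]
    split_ifs with h'
    · exact f1 _ _
    · rfl

-- A4 : involution property with offset
private lemma alpha_inv (x y c : ℕ → Fin 2) :
    alphaMap (compSeq x + c) (alphaMap x y + c) = y + c := by
  by_cases h : y = x
  · subst h
    rw [alpha_self, alpha_add, alpha_self, compSeq_comp]
  · have hxy : x ≠ y := fun e => h e.symm
    obtain ⟨n, hn, hlt⟩ := exists_fd hxy
    rw [alpha_eq x y n hn hlt]
    set z : ℕ → Fin 2 := (fun i => if i ≤ n then 1 - y i else y i) + c with hz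
    have hzi : ∀ i, z i = (if i ≤ n then 1 - y i else y i) + c i := fun i => rfl
    have hn2 : (compSeq x + c) n ≠ z n := by
      rw [hzi]
      simp only [Pi.add_apply, compSeq, if_pos (le_refl n)]
      intro e
      have e2 := add_right_cancel e
      exact hn (by
        have : x n = y n := by
          have := congrArg (fun t => 1 - t) e2
          simpa [f6] using this
        exact this)
    have hlt2 : ∀ i < n, (compSeq x + c) i = z i := fun i hi => by
      rw [hzi]
      simp only [Pi.add_apply, compSeq, if_pos (le_of_lt hi), hlt i hi]
    rw [alpha_eq (compSeq x + c) z n hn2 hlt2]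
    funext i
    simp only [Pi.add_apply]
    rw [hzi]
    split_ifs with h'
    · exact f4 _ _
    · rfl

-- agreement transfer for the α-form
private lemma alpha_agree (x y c : ℕ → Fin 2) (n : ℕ) (hag : ∀ i ≤ n, x i = y i) :
    ∀ i ≤ n, (compSeq x + c) i = (alphaMap x y + c) i := by
  by_cases h : y = x
  · subst h
    rw [alpha_self]
    intro i _
    rfl
  · have hxy : x ≠ y := fun e => h e.symm
    obtain ⟨N, hN, hltN⟩ := exists_fd hxy
    have hNn : n < N := by
      by_contra hc
      exact hN (hag N (le_of_not_gt hc))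
    rw [alpha_eq x y N hN hltN]
    intro i hi
    simp only [Pi.add_apply, compSeq, if_pos (le_of_lt (lt_of_le_of_lt hi hNn))]
    rw [hag i hi]

/-- The local-form invariant: everywhere locally a finite-support offset, or an
`alphaMap`-at-the-basepoint plus finite-support offset. -/
private def LocForm (γ : Equiv.Perm (ℕ → Fin 2)) : Prop :=
  ∀ x : ℕ → Fin 2, ∃ n : ℕ, ∃ c : ℕ → Fin 2, (∃ m, ∀ i, m ≤ i → c i = 0) ∧
    ((∀ y, (∀ i ≤ n, x i = y i) → γ y = y + c) ∨
     (∀ y, (∀ i ≤ n, x i = y i) → γ y = alphaMap x y + c))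

private lemma locForm_gen {g : Equiv.Perm (ℕ → Fin 2)} {x₀ : ℕ → Fin 2}
    (hg : ∀ y, g y = alphaMap x₀ y) : LocForm g := by
  intro x
  by_cases h : x₀ = x
  · subst h
    exact ⟨0, 0, ⟨0, fun i _ => rfl⟩, Or.inr fun y _ => by rw [hg, add_zero]⟩
  · obtain ⟨n, hn, hlt⟩ := exists_fd h
    refine ⟨n, fun i => if i ≤ n then 1 else 0, ⟨n + 1, fun i hi => by
      simp only [if_neg (by omega : ¬ i ≤ n)]⟩, Or.inl fun y hy => ?_⟩
    have hn' : x₀ n ≠ y n := by rw [← hy n (le_refl n)]; exact hn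
    have hlt' : ∀ i < n, x₀ i = y i := fun i hi => by
      rw [← hy i (le_of_lt hi)]; exact hlt i hi
    rw [hg, alpha_eq x₀ y n hn' hlt']
    funext i
    simp only [Pi.add_apply]
    split_ifs with h'
    · exact f2 _
    · exact (add_zero _).symm

private lemma locForm_one : LocForm 1 := fun _ =>
  ⟨0, 0, ⟨0, fun _ _ => rfl⟩, Or.inl fun y _ => by
    simp [Equiv.Perm.one_apply]⟩

private lemma add_add_self (w c : ℕ → Fin 2) : w + c + c = w := by
  funext i
  simp only [Pi.add_apply]
  rw [add_assoc, f3, add_zero]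

private lemma locForm_mul {γ₁ γ₂ : Equiv.Perm (ℕ → Fin 2)}
    (H₁ : LocForm γ₁) (H₂ : LocForm γ₂) : LocForm (γ₁ * γ₂) := by
  intro x
  obtain ⟨n₂, c₂, ⟨m₂, hm₂⟩, h₂⟩ := H₂ x
  obtain ⟨n₁, c₁, ⟨m₁, hm₁⟩, h₁⟩ := H₁ (γ₂ x)
  have hcfin : ∃ m, ∀ i, m ≤ i → (c₂ + c₁) i = 0 := by
    refine ⟨max m₂ m₁, fun i hi => ?_⟩
    simp only [Pi.add_apply, hm₂ i (le_trans (le_max_left _ _) hi),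
      hm₁ i (le_trans (le_max_right _ _) hi), add_zero]
  refine ⟨max n₂ n₁, c₂ + c₁, hcfin, ?_⟩
  rcases h₂ with h₂ | h₂
  · -- γ₂ is an offset near x
    have hx2 : γ₂ x = x + c₂ := h₂ x (fun _ _ => rfl)
    rcases h₁ with h₁ | h₁
    · refine Or.inl fun y hy => ?_
      have hy₂ : γ₂ y = y + c₂ := h₂ y (fun i hi => hy i (le_trans hi (le_max_left _ _)))
      have hag : ∀ i ≤ n₁, (γ₂ x) i = (γ₂ y) i := fun i hi => by
        rw [hx2, hy₂]
        simp only [Pi.add_apply, hy i (le_trans hi (le_max_right _ _))]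
      have := h₁ (γ₂ y) hag
      rw [Equiv.Perm.mul_apply, this, hy₂, add_assoc]
    · refine Or.inr fun y hy => ?_
      have hy₂ : γ₂ y = y + c₂ := h₂ y (fun i hi => hy i (le_trans hi (le_max_left _ _)))
      have hag : ∀ i ≤ n₁, (γ₂ x) i = (γ₂ y) i := fun i hi => by
        rw [hx2, hy₂]
        simp only [Pi.add_apply, hy i (le_trans hi (le_max_right _ _))]
      have := h₁ (γ₂ y) hag
      rw [Equiv.Perm.mul_apply, this, hy₂, hx2, alpha_add, add_assoc]
  · -- γ₂ is α-form near x
    have hx2 : γ₂ x = compSeq x + c₂ := by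
      rw [h₂ x (fun _ _ => rfl), alpha_self]
    rcases h₁ with h₁ | h₁
    · refine Or.inr fun y hy => ?_
      have hy₂ : γ₂ y = alphaMap x y + c₂ :=
        h₂ y (fun i hi => hy i (le_trans hi (le_max_left _ _)))
      have hag : ∀ i ≤ n₁, (γ₂ x) i = (γ₂ y) i := fun i hi => by
        rw [hx2, hy₂]
        exact alpha_agree x y c₂ n₁ (fun j hj => hy j (le_trans hj (le_max_right _ _))) i hi
      have := h₁ (γ₂ y) hag
      rw [Equiv.Perm.mul_apply, this, hy₂, add_assoc]
    · refine Or.inl fun y hy => ?_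
      have hy₂ : γ₂ y = alphaMap x y + c₂ :=
        h₂ y (fun i hi => hy i (le_trans hi (le_max_left _ _)))
      have hag : ∀ i ≤ n₁, (γ₂ x) i = (γ₂ y) i := fun i hi => by
        rw [hx2, hy₂]
        exact alpha_agree x y c₂ n₁ (fun j hj => hy j (le_trans hj (le_max_right _ _))) i hi
      have := h₁ (γ₂ y) hag
      rw [Equiv.Perm.mul_apply, this, hy₂, hx2, alpha_inv, add_assoc]

private lemma locForm_inv {γ : Equiv.Perm (ℕ → Fin 2)} (H : LocForm γ) : LocForm γ⁻¹ := by
  intro x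
  obtain ⟨n, c, hc, h⟩ := H (γ⁻¹ x)
  have hfix : γ (γ⁻¹ x) = x := Equiv.apply_symm_apply γ x
  rcases h with h | h
  · -- offset case
    have hx0 : x = γ⁻¹ x + c := by
      rw [← h (γ⁻¹ x) (fun _ _ => rfl)]; exact hfix.symm
    have hx0' : γ⁻¹ x = x + c := by
      conv_rhs => rw [hx0]
      rw [add_add_self]
    refine ⟨n, c, hc, Or.inl fun w hw => ?_⟩
    have hag : ∀ i ≤ n, (γ⁻¹ x) i = (w + c) i := fun i hi => by
      rw [hx0']
      simp only [Pi.add_apply, hw i hi]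
    have hγ : γ (w + c) = w := by rw [h (w + c) hag, add_add_self]
    exact Equiv.Perm.inv_eq_iff_eq.mpr hγ.symm
  · -- α case
    have hx0 : x = compSeq (γ⁻¹ x) + c := by
      rw [← alpha_self, ← h (γ⁻¹ x) (fun _ _ => rfl)]; exact hfix.symm
    have hx0' : γ⁻¹ x = compSeq x + c := by
      conv_rhs => rw [hx0]
      rw [compSeq_add, compSeq_comp, add_add_self]
    refine ⟨n, c, hc, Or.inr fun w hw => ?_⟩
    have hag : ∀ i ≤ n, (γ⁻¹ x) i = (alphaMap x w + c) i := fun i hi => by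
      rw [hx0']
      exact alpha_agree x w c n hw i hi
    have hγ : γ (alphaMap x w + c) = w := by
      rw [h (alphaMap x w + c) hag, hx0', alpha_inv, add_add_self]
    exact Equiv.Perm.inv_eq_iff_eq.mpr hγ.symm

private lemma seqDist_agree {x y : ℕ → Fin 2} {n : ℕ}
    (h : seqDist x y < Real.exp (-(n : ℝ))) : ∀ i ≤ n, x i = y i := by
  classical
  by_cases hxy : x = y
  · subst hxy; exact fun _ _ => rfl
  · intro i hi
    by_contra hne
    have hle : Nat.find (Function.ne_iff.mp hxy) ≤ i := Nat.find_le hne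
    have hval : seqDist x y = Real.exp (-(Nat.find (Function.ne_iff.mp hxy) : ℝ)) := by
      rw [seqDist, dif_neg hxy]
      all_goals
        congr 2
        exact_mod_cast find_irrel _ _ _
    rw [hval] at h
    have h1 : ((Nat.find (Function.ne_iff.mp hxy) : ℕ) : ℝ) ≤ (n : ℝ) := by
      exact_mod_cast hle.trans hi
    have h2 := Real.exp_lt_exp.mp h
    linarith

end aux

/-- The subgroup `Γ` of the group of bijections of `Y = {0,1}^ℕ` generated by the maps
`α_x` acts locally rigidly on `Y`: every `γ ∈ Γ` fixing a point `x` is the identity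
on a ball around `x`. -/
theorem alpha_closure_acts_locally_rigidly
    (γ : Equiv.Perm (ℕ → Fin 2))
    (hγ : γ ∈ Subgroup.closure
      {g : Equiv.Perm (ℕ → Fin 2) | ∃ x : ℕ → Fin 2, ∀ y : ℕ → Fin 2, g y = alphaMap x y})
    (x : ℕ → Fin 2) (hx : γ x = x) :
    ∃ ε > 0, ∀ y : ℕ → Fin 2, seqDist x y < ε → γ y = y := by
  have key : LocForm γ := by
    refine Subgroup.closure_induction (p := fun g _ => LocForm g) ?_ locForm_one
      (fun _ _ _ _ h1 h2 => locForm_mul h1 h2) (fun _ _ h => locForm_inv h) hγ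
    rintro g ⟨x₀, hg⟩
    exact locForm_gen hg
  obtain ⟨n, c, ⟨m, hm⟩, hform⟩ := key x
  rcases hform with h | h
  · -- offset form; fixed point forces c = 0
    have hc0 : c = 0 := by
      have hxx : γ x = x + c := h x (fun _ _ => rfl)
      rw [hx] at hxx
      funext i
      have := congrFun hxx i
      simp only [Pi.add_apply] at this
      have : x i + c i = x i + 0 := by rw [add_zero]; exact this.symm
      exact add_left_cancel this
    refine ⟨Real.exp (-(n : ℝ)), Real.exp_pos _, fun y hy => ?_⟩
    rw [h y (seqDist_agree hy), hc0, add_zero]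
  · -- α form is impossible at a fixed point
    exfalso
    have hxx : γ x = alphaMap x x + c := h x (fun _ _ => rfl)
    rw [hx, alpha_self] at hxx
    have := congrFun hxx m
    simp only [Pi.add_apply, compSeq, hm m (le_refl m), add_zero] at this
    exact f7 (x m) this
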